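/- For every unit vector n^i in ℝ³, the symmetric linear boundary operator A_n on the 30-dimensional space V has exactly six positive eigenvalues, eighteen zero eigenvalues, and six negative eigenvalues, counted with multiplicity. -/

import Mathlib

open scoped BigOperators Classical

/-- The 36-dimensional ambient space of triples `(g_ij, K_ij, f_kij)` of constant
tensors (no symmetry imposed). -/
abbrev W : Type :=
  (Fin 3 → Fin 3 → ℝ) × (Fin 3 → Fin 3 → ℝ) × (Fin 3 → Fin 3 → Fin 3 → ℝ)

/-- The 30-dimensional subspace `V` of `W` consisting of triples with `g`, `K`, and `f`
symmetric in the indices `i` and `j`. -/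
def Vsub : Submodule ℝ W where
  carrier := {v | (∀ i j, v.1 i j = v.1 j i) ∧ (∀ i j, v.2.1 i j = v.2.1 j i) ∧
    (∀ k i j, v.2.2 k i j = v.2.2 k j i)}
  add_mem' := by
    rintro a b ⟨a1, a2, a3⟩ ⟨b1, b2, b3⟩
    refine ⟨fun i j => ?_, fun i j => ?_, fun k i j => ?_⟩ <;>
      simp only [Prod.fst_add, Prod.snd_add, Pi.add_apply] <;>
      [rw [a1 i j, b1 i j]; rw [a2 i j, b2 i j]; rw [a3 k i j, b3 k i j]]
  zero_mem' := ⟨fun _ _ => rfl, fun _ _ => rfl, fun _ _ _ => rfl⟩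
  smul_mem' := by
    rintro c a ⟨a1, a2, a3⟩
    refine ⟨fun i j => ?_, fun i j => ?_, fun k i j => ?_⟩ <;>
      simp only [Prod.smul_fst, Prod.smul_snd, Pi.smul_apply] <;>
      [rw [a1 i j]; rw [a2 i j]; rw [a3 k i j]]

/-- The boundary operator `A_n`: `(g,K,f) ↦ (0, n^k f_kij, n_k K_ij)`. -/
def bop (n : Fin 3 → ℝ) (v : W) : W :=
  (0, fun i j => ∑ k, n k * v.2.2 k i j, fun k i j => n k * v.2.1 i j)

namespace BopAux

/-- Index of the symmetric pair `(p,q)` among the six pairs with `p ≤ q`. -/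
def sidx : Fin 3 → Fin 3 → Fin 6 := ![![0,1,2],![1,3,4],![2,4,5]]
/-- First member of the `a`-th symmetric pair. -/
def pf : Fin 6 → Fin 3 := ![0,0,0,1,1,2]
/-- Second member of the `a`-th symmetric pair. -/
def ps : Fin 6 → Fin 3 := ![0,1,2,1,2,2]
/-- Sector of a coordinate index. -/
def sec (i : Fin 30) : Fin 5 := ⟨i.val / 6, by omega⟩
/-- Symmetric-pair part of a coordinate index. -/
def sy (i : Fin 30) : Fin 6 := ⟨i.val % 6, by omega⟩
/-- Coordinate index built from a sector and a symmetric pair. -/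
def idx (s : Fin 5) (a : Fin 6) : Fin 30 := ⟨s.val * 6 + a.val, by omega⟩
/-- The eigenvalue attached to each sector. -/
noncomputable def nu : Fin 5 → ℝ := fun s => if s.val = 1 then 1 else if s.val = 2 then -1 else 0

lemma sec_idx (s : Fin 5) (a : Fin 6) : sec (idx s a) = s := by
  apply Fin.ext; show (s.val * 6 + a.val) / 6 = s.val; omega
lemma sy_idx (s : Fin 5) (a : Fin 6) : sy (idx s a) = a := by
  apply Fin.ext; show (s.val * 6 + a.val) % 6 = a.val; omega
lemma idx_sec_sy (i : Fin 30) : idx (sec i) (sy i) = i := by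
  apply Fin.ext; show (i.val / 6) * 6 + i.val % 6 = i.val; omega
lemma sidx_symm : ∀ p q, sidx p q = sidx q p := by decide
lemma sidx_pf_ps : ∀ a, sidx (pf a) (ps a) = a := by decide

/-- Reconstruction map: coefficients ↦ tensor triple (the columns are the eigenvectors). -/
noncomputable def G0 (B : Fin 3 → Fin 3 → ℝ) (c : Fin 30 → ℝ) : W :=
  (fun p q => c (idx 0 (sidx p q)),
   fun p q => c (idx 1 (sidx p q)) + c (idx 2 (sidx p q)),
   fun k p q => B 0 k * (c (idx 1 (sidx p q)) - c (idx 2 (sidx p q)))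
     + B 1 k * c (idx 3 (sidx p q)) + B 2 k * c (idx 4 (sidx p q)))

/-- Coordinate-extraction map, inverse to `G0` on `Vsub`. -/
noncomputable def F0 (B : Fin 3 → Fin 3 → ℝ) (v : W) : Fin 30 → ℝ := fun i =>
  ![ v.1 (pf (sy i)) (ps (sy i)),
     (v.2.1 (pf (sy i)) (ps (sy i)) + ∑ k, B 0 k * v.2.2 k (pf (sy i)) (ps (sy i))) / 2,
     (v.2.1 (pf (sy i)) (ps (sy i)) - ∑ k, B 0 k * v.2.2 k (pf (sy i)) (ps (sy i))) / 2,
     ∑ k, B 1 k * v.2.2 k (pf (sy i)) (ps (sy i)),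
     ∑ k, B 2 k * v.2.2 k (pf (sy i)) (ps (sy i)) ] (sec i)

lemma G0_mem (B : Fin 3 → Fin 3 → ℝ) (c : Fin 30 → ℝ) : G0 B c ∈ Vsub := by
  refine ⟨fun p q => ?_, fun p q => ?_, fun k p q => ?_⟩ <;>
    simp only [G0] <;> rw [sidx_symm p q]

lemma G0_add (B : Fin 3 → Fin 3 → ℝ) (c d : Fin 30 → ℝ) :
    G0 B (c + d) = G0 B c + G0 B d := by
  refine Prod.ext ?_ (Prod.ext ?_ ?_) <;> funext <;>
    simp only [G0, Pi.add_apply, Prod.fst_add, Prod.snd_add] <;> ring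

lemma G0_smul (B : Fin 3 → Fin 3 → ℝ) (r : ℝ) (c : Fin 30 → ℝ) :
    G0 B (r • c) = r • G0 B c := by
  refine Prod.ext ?_ (Prod.ext ?_ ?_) <;> funext <;>
    simp only [G0, Pi.smul_apply, Prod.smul_fst, Prod.smul_snd, smul_eq_mul] <;> ring

variable {B : Fin 3 → Fin 3 → ℝ}

/-- Orthonormality of the rows of `B`, expanded. -/
def Ortho (B : Fin 3 → Fin 3 → ℝ) : Prop :=
  ∀ r s : Fin 3, B r 0 * B s 0 + B r 1 * B s 1 + B r 2 * B s 2 = if r = s then 1 else 0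

lemma Ortho.comp (hB : Ortho B) :
    ∀ k l : Fin 3, B 0 k * B 0 l + B 1 k * B 1 l + B 2 k * B 2 l = if k = l then 1 else 0 := by
  intro k l
  let M : Matrix (Fin 3) (Fin 3) ℝ := Matrix.of B
  have hM : M * M.transpose = 1 := by
    ext r s
    rw [Matrix.mul_apply, Fin.sum_univ_three]
    simpa [M, Matrix.one_apply] using hB r s
  have hM' : M.transpose * M = 1 := mul_eq_one_comm.mp hM
  have h2 := congrFun (congrFun hM' k) l
  rw [Matrix.mul_apply, Fin.sum_univ_three] at h2
  simpa [M, Matrix.one_apply, mul_comm] using h2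

lemma nu0 : nu 0 = 0 := rfl
lemma nu1 : nu 1 = 1 := rfl
lemma nu2 : nu 2 = -1 := rfl
lemma nu3 : nu 3 = 0 := rfl
lemma nu4 : nu 4 = 0 := rfl

/-- The key computation: the boundary operator acts diagonally in the `G0` coordinates. -/
lemma bop_G0 (hB : Ortho B) (c : Fin 30 → ℝ) :
    bop (B 0) (G0 B c) = G0 B (fun j => nu (sec j) * c j) := by
  have h00 := hB 0 0; rw [if_pos rfl] at h00
  have h01 := hB 0 1; rw [if_neg (by decide)] at h01
  have h02 := hB 0 2; rw [if_neg (by decide)] at h02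
  refine Prod.ext ?_ (Prod.ext ?_ ?_)
  · funext p q
    simp only [bop, G0, sec_idx, Pi.zero_apply, nu0]
    ring
  · funext p q
    simp only [bop, G0, sec_idx, nu1, nu2, Fin.sum_univ_three]
    linear_combination (c (idx 1 (sidx p q)) - c (idx 2 (sidx p q))) * h00
      + c (idx 3 (sidx p q)) * h01 + c (idx 4 (sidx p q)) * h02
  · funext k p q
    simp only [bop, G0, sec_idx, nu1, nu2, nu3, nu4]
    ring

lemma F0_G0 (hB : Ortho B) (c : Fin 30 → ℝ) : F0 B (G0 B c) = c := by
  have h00 := hB 0 0; rw [if_pos rfl] at h00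
  have h01 := hB 0 1; rw [if_neg (by decide)] at h01
  have h02 := hB 0 2; rw [if_neg (by decide)] at h02
  have h10 := hB 1 0; rw [if_neg (by decide)] at h10
  have h11 := hB 1 1; rw [if_pos rfl] at h11
  have h12 := hB 1 2; rw [if_neg (by decide)] at h12
  have h20 := hB 2 0; rw [if_neg (by decide)] at h20
  have h21 := hB 2 1; rw [if_neg (by decide)] at h21
  have h22 := hB 2 2; rw [if_pos rfl] at h22
  have key : ∀ (s : Fin 5) (a : Fin 6), F0 B (G0 B c) (idx s a) = c (idx s a) := by
    intro s a
    fin_cases s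
    · show F0 B (G0 B c) (idx 0 a) = c (idx 0 a)
      simp [F0, G0, sec_idx, sy_idx, sidx_pf_ps]
    · show F0 B (G0 B c) (idx 1 a) = c (idx 1 a)
      simp only [F0, G0, sec_idx, sy_idx, sidx_pf_ps, Fin.sum_univ_three,
        Matrix.cons_val_one, Matrix.head_cons, Matrix.cons_val_zero]
      linear_combination ((c (idx 1 a) - c (idx 2 a)) / 2) * h00
        + (c (idx 3 a) / 2) * h01 + (c (idx 4 a) / 2) * h02
    · show F0 B (G0 B c) (idx 2 a) = c (idx 2 a)
      simp only [F0, G0, sec_idx, sy_idx, sidx_pf_ps, Fin.sum_univ_three,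
        Matrix.cons_val_two, Matrix.tail_cons, Matrix.head_cons]
      linear_combination (-(c (idx 1 a) - c (idx 2 a)) / 2) * h00
        - (c (idx 3 a) / 2) * h01 - (c (idx 4 a) / 2) * h02
    · show F0 B (G0 B c) (idx 3 a) = c (idx 3 a)
      simp only [F0, G0, sec_idx, sy_idx, sidx_pf_ps, Fin.sum_univ_three,
        Matrix.cons_val_three, Matrix.tail_cons, Matrix.head_cons]
      linear_combination (c (idx 1 a) - c (idx 2 a)) * h10
        + c (idx 3 a) * h11 + c (idx 4 a) * h12
    · show F0 B (G0 B c) (idx 4 a) = c (idx 4 a)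
      simp only [F0, G0, sec_idx, sy_idx, sidx_pf_ps, Fin.sum_univ_three,
        Matrix.cons_val_four, Matrix.tail_cons, Matrix.head_cons]
      linear_combination (c (idx 1 a) - c (idx 2 a)) * h20
        + c (idx 3 a) * h21 + c (idx 4 a) * h22
  funext i
  rw [← idx_sec_sy i]
  exact key _ _

lemma symApp {g : Fin 3 → Fin 3 → ℝ} (h : ∀ i j, g i j = g j i) (p q : Fin 3) :
    g (pf (sidx p q)) (ps (sidx p q)) = g p q := by
  fin_cases p <;> fin_cases q <;> first | rfl | exact h _ _

lemma G0_F0 (hB : Ortho B) {v : W} (hv : v ∈ Vsub) : G0 B (F0 B v) = v := by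
  obtain ⟨h1, h2, h3⟩ := hv
  have comp := hB.comp
  have c00 := comp 0 0; rw [if_pos rfl] at c00
  have c01 := comp 0 1; rw [if_neg (by decide)] at c01
  have c02 := comp 0 2; rw [if_neg (by decide)] at c02
  have c10 := comp 1 0; rw [if_neg (by decide)] at c10
  have c11 := comp 1 1; rw [if_pos rfl] at c11
  have c12 := comp 1 2; rw [if_neg (by decide)] at c12
  have c20 := comp 2 0; rw [if_neg (by decide)] at c20
  have c21 := comp 2 1; rw [if_neg (by decide)] at c21
  have c22 := comp 2 2; rw [if_pos rfl] at c22
  refine Prod.ext ?_ (Prod.ext ?_ ?_)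
  · funext p q
    simp only [G0, F0, sec_idx, sy_idx, Matrix.cons_val_zero]
    exact symApp h1 p q
  · funext p q
    simp only [G0, F0, sec_idx, sy_idx, Fin.sum_univ_three,
      Matrix.cons_val_zero, Matrix.cons_val_one, Matrix.head_cons,
      Matrix.cons_val_two, Matrix.tail_cons]
    rw [symApp h2 p q]
    ring
  · funext k p q
    simp only [G0, F0, sec_idx, sy_idx, Fin.sum_univ_three,
      Matrix.cons_val_zero, Matrix.cons_val_one, Matrix.head_cons,
      Matrix.cons_val_two, Matrix.tail_cons, Matrix.cons_val_three,
      Matrix.cons_val_four]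
    rw [symApp (fun i j => h3 0 i j) p q, symApp (fun i j => h3 1 i j) p q,
      symApp (fun i j => h3 2 i j) p q]
    have hk : k = 0 ∨ k = 1 ∨ k = 2 := by revert k; decide
    rcases hk with rfl | rfl | rfl
    · linear_combination (v.2.2 0 p q) * c00 + (v.2.2 1 p q) * c01 + (v.2.2 2 p q) * c02
    · linear_combination (v.2.2 0 p q) * c10 + (v.2.2 1 p q) * c11 + (v.2.2 2 p q) * c12
    · linear_combination (v.2.2 0 p q) * c20 + (v.2.2 1 p q) * c21 + (v.2.2 2 p q) * c22

/-- Any unit vector is the first row of an orthonormal `3 × 3` matrix. -/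
lemma exists_ortho (n : Fin 3 → ℝ) (hn : ∑ i, n i ^ 2 = 1) :
    ∃ B : Fin 3 → Fin 3 → ℝ, B 0 = n ∧ Ortho B := by
  let nE : EuclideanSpace ℝ (Fin 3) := WithLp.toLp 2 n
  have hcard : Module.finrank ℝ (EuclideanSpace ℝ (Fin 3)) = Fintype.card (Fin 3) := by
    exact finrank_euclideanSpace
  have horth : Orthonormal ℝ (Set.restrict {(0 : Fin 3)} (fun _ : Fin 3 => nE)) := by
    constructor
    · intro i
      have : ‖nE‖ = 1 := by
        rw [EuclideanSpace.norm_eq]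
        simp only [Real.norm_eq_abs, sq_abs]
        show √(∑ x : Fin 3, n x ^ 2) = 1
        rw [hn, Real.sqrt_one]
      exact this
    · intro i j hij
      exact absurd (Subtype.ext (i.2.trans j.2.symm)) hij
  obtain ⟨b, hb⟩ := horth.exists_orthonormalBasis_extension_of_card_eq hcard
  have hb0 : b 0 = nE := hb 0 rfl
  refine ⟨fun r k => b r k, funext fun k => congrFun (congrArg WithLp.ofLp hb0) k, ?_⟩
  intro r s
  have h := orthonormal_iff_ite.mp b.orthonormal r s
  rw [PiLp.inner_apply] at h
  simp only [RCLike.inner_apply, conj_trivial] at h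
  rw [Fin.sum_univ_three] at h
  simpa [mul_comm] using h

end BopAux

open BopAux in
/-- for every unit vector `n`, the symmetric boundary operator `A_n` on the
30-dimensional space `V`, diagonalized in a basis of eigenvectors, has exactly six
positive, eighteen zero, and six negative eigenvalues, counted with multiplicity. -/
theorem bop_eigenvalue_counts
    (n : Fin 3 → ℝ) (hn : ∑ i, n i ^ 2 = 1) :
    ∃ (b : Module.Basis (Fin 30) ℝ Vsub) (μ : Fin 30 → ℝ),
      (∀ i, bop n (b i : W) = μ i • (b i : W)) ∧
      (Finset.univ.filter fun i => 0 < μ i).card = 6 ∧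
      (Finset.univ.filter fun i => μ i = 0).card = 18 ∧
      (Finset.univ.filter fun i => μ i < 0).card = 6 := by
  obtain ⟨B, hB0, hB⟩ := exists_ortho n hn
  let Gl : (Fin 30 → ℝ) →ₗ[ℝ] Vsub :=
    { toFun := fun c => ⟨G0 B c, G0_mem B c⟩,
      map_add' := fun c d => Subtype.ext (G0_add B c d),
      map_smul' := fun r c => Subtype.ext (G0_smul B r c) }
  let e : (Fin 30 → ℝ) ≃ₗ[ℝ] Vsub :=
    { Gl with
      invFun := fun v => F0 B v.val,
      left_inv := fun c => by
        apply funext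
        intro i
        exact congrFun (F0_G0 hB c) i,
      right_inv := fun v => Subtype.ext (G0_F0 hB v.2) }
  refine ⟨Module.Basis.ofEquivFun e.symm, fun i => nu (sec i), ?_, ?_, ?_, ?_⟩
  · intro i
    have h1 : ((Module.Basis.ofEquivFun e.symm) i : Vsub) = e.symm.symm (Pi.single i 1) :=
      congrFun (Module.Basis.coe_ofEquivFun e.symm) i
    rw [LinearEquiv.symm_symm] at h1
    have h2 : ((Module.Basis.ofEquivFun e.symm) i : W) = G0 B (Pi.single i 1) := by
      rw [h1]; rfl
    rw [h2, ← hB0, bop_G0 hB]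
    have h3 : (fun j => nu (sec j) * (Pi.single i 1 : Fin 30 → ℝ) j) = nu (sec i) • (Pi.single i 1 : Fin 30 → ℝ) := by
      funext j
      by_cases h : j = i
      · subst h; simp
      · simp [Pi.single_eq_of_ne h]
    rw [h3, G0_smul]
  · have h : (Finset.univ.filter fun i : Fin 30 => 0 < nu (sec i))
        = (Finset.univ.filter fun i : Fin 30 => i.val / 6 = 1) := by
      apply Finset.filter_congr
      intro i _
      simp only [nu, sec]
      split_ifs with ha
      · norm_num [ha]
      · by_cases hb : (i : ℕ) / 6 = 2 <;> simp [ha, hb]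
    rw [h]
    decide
  · have h : (Finset.univ.filter fun i : Fin 30 => nu (sec i) = 0)
        = (Finset.univ.filter fun i : Fin 30 => ¬(i.val / 6 = 1) ∧ ¬(i.val / 6 = 2)) := by
      apply Finset.filter_congr
      intro i _
      simp only [nu, sec]
      split_ifs with ha
      · norm_num [ha]
      · by_cases hb : (i : ℕ) / 6 = 2 <;> simp [ha, hb]
    rw [h]
    decide
  · have h : (Finset.univ.filter fun i : Fin 30 => nu (sec i) < 0)
        = (Finset.univ.filter fun i : Fin 30 => i.val / 6 = 2) := by
      apply Finset.filter_congr
      intro i _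
      simp only [nu, sec]
      split_ifs with ha
      · norm_num [ha]
      · by_cases hb : (i : ℕ) / 6 = 2 <;> simp [ha, hb]
    rw [h]
    decide
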